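/- Let A be an n × n matrix over K (K = ℝ or ℂ), let λ ∈ K be an eigenvalue of A, and let k ∈ {1, …, n − 1}. Then the geometric multiplicity of λ equals k if and only if rank adj_k(A − λI) = 1. -/

import Mathlib

open Matrix

variable {K : Type*}

/-- The `k`-th compound matrix of an `m × n` matrix `A`: it is indexed by the
`k`-element subsets of the row/column index sets (which correspond to `Fin (choose _ k)`
via the lexicographic order), and its `(S, T)` entry is the `k × k` minor of `A`
on rows `S` and columns `T`. -/
def compound [CommRing K] {m n : ℕ} (k : ℕ) (A : Matrix (Fin m) (Fin n) K) :
    Matrix {s : Finset (Fin m) // s.card = k} {t : Finset (Fin n) // t.card = k} K :=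
  fun S T => (A.submatrix (S.1.orderEmbOfFin S.2) (T.1.orderEmbOfFin T.2)).det

/-- The `k`-th adjugate of an `n × n` matrix `A` (generalizing the classical adjugate,
which is the case `k = 1`): its `(S, T)` entry is `(-1) ^ (Σ S + Σ T)` times the
`(n-k) × (n-k)` minor of `A` obtained by deleting the rows indexed by `T` and the
columns indexed by `S`.  (The sums `Σ S`, `Σ T` are taken with 1-based indexing in the
classical formula; with 0-based indexing the parity is unchanged.) -/
def adjCompound [CommRing K] {n : ℕ} (k : ℕ) (A : Matrix (Fin n) (Fin n) K) :
    Matrix {s : Finset (Fin n) // s.card = k} {t : Finset (Fin n) // t.card = k} K :=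
  fun S T =>
    (-1 : K) ^ ((∑ i ∈ S.1, (i : ℕ)) + (∑ j ∈ T.1, (j : ℕ))) *
      (A.submatrix
        ((T.1ᶜ).orderEmbOfFin (show (T.1ᶜ).card = n - k by
          simp [Finset.card_compl, T.2]))
        ((S.1ᶜ).orderEmbOfFin (show (S.1ᶜ).card = n - k by
          simp [Finset.card_compl, S.2]))).det

/-- The Plücker coordinates of `x₁ ∧ ⋯ ∧ x_k ∈ ℂ^(choose n k)`: the coordinate at the
`k`-element subset `S` is the `k × k` minor of the `n × k` matrix `[x₁ ⋯ x_k]` on rows `S`. -/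
def wedgeVec [CommRing K] {n k : ℕ} (x : Fin k → Fin n → K) :
    {s : Finset (Fin n) // s.card = k} → K :=
  fun S => (Matrix.of fun (i j : Fin k) => x j (S.1.orderEmbOfFin S.2 i)).det

/-- The characteristic polynomial `P(t) = det (A - t I)`. -/
noncomputable def detPoly [CommRing K] {n : ℕ} (A : Matrix (Fin n) (Fin n) K) : Polynomial K :=
  ((Matrix.of fun i j => Polynomial.C (A i j)) - (Polynomial.X : Polynomial K) • 1).det

section helpers
variable {K : Type*} [Field K]

lemma rank_submatrix_le'' {m n m' n' : Type*}
    [Fintype m] [Fintype n] [Fintype m'] [Fintype n']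
    (A : Matrix m n K) (f : m' → m) (g : n' → n) :
    (A.submatrix f g).rank ≤ A.rank := by
  classical
  have h : A.submatrix f g =
      ((1 : Matrix m m K).submatrix f id) * (A * ((1 : Matrix n n K).submatrix id g)) := by
    ext i j
    simp [Matrix.mul_apply, Matrix.one_apply, Finset.sum_ite_eq, Finset.sum_ite_eq',
      Finset.mul_sum]
  rw [h]
  exact le_trans (Matrix.rank_mul_le_right _ _) (Matrix.rank_mul_le_left _ _)

lemma le_rank_of_det_ne_zero {m n : Type*} [Fintype m] [Fintype n] {s : ℕ}
    (A : Matrix m n K) (f : Fin s → m) (g : Fin s → n)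
    (h : (A.submatrix f g).det ≠ 0) : s ≤ A.rank := by
  classical
  have h1 : (A.submatrix f g).rank = s := by
    simpa using Matrix.rank_of_isUnit (A.submatrix f g)
      ((Matrix.isUnit_iff_isUnit_det _).2 h.isUnit)
  exact h1 ▸ rank_submatrix_le'' A f g

end helpers

section helpers2
variable {K : Type*} [Field K]

lemma exists_linearIndependent_cols {m n : Type*} [Fintype m] [Fintype n] [LinearOrder n]
    (A : Matrix m n K) {s : ℕ} (hs : s ≤ A.rank) :
    ∃ (T : Finset n) (hT : T.card = s),
      LinearIndependent K (fun j : Fin s => Aᵀ (T.orderEmbOfFin hT j)) := by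
  classical
  obtain ⟨b, hbsub, hbspan, hbind⟩ := exists_linearIndependent K (Set.range Aᵀ)
  have hbfin : b.Finite := Set.Finite.subset (Set.finite_range _) hbsub
  haveI := hbfin.fintype
  have hcard : s ≤ b.toFinset.card := by
    have h1 : A.rank ≤ b.toFinset.card := by
      rw [Matrix.rank_eq_finrank_span_cols, show Set.range A.col = Set.range Aᵀ from rfl, ← hbspan]
      exact finrank_span_le_card (R := K) b
    omega
  obtain ⟨F, hFsub, hFcard⟩ := Finset.exists_subset_card_eq hcard
  have hmem : ∀ x ∈ F, ∃ j, Aᵀ j = x := fun x hx =>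
    hbsub (by simpa using (Set.mem_toFinset.1 (hFsub hx)))
  choose ch hch using hmem
  let chf : {x // x ∈ F} → n := fun x => ch x.1 x.2
  have hchf : ∀ x : {x // x ∈ F}, Aᵀ (chf x) = x.1 := fun x => hch x.1 x.2
  have hchinj : Function.Injective chf := by
    intro x y hxy
    have h2 : Aᵀ (chf x) = Aᵀ (chf y) := congrArg Aᵀ hxy
    rw [hchf, hchf] at h2
    exact Subtype.ext h2
  let T : Finset n := F.attach.image chf
  have hTcard : T.card = s := by
    rw [Finset.card_image_of_injective _ hchinj, Finset.card_attach, hFcard]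
  refine ⟨T, hTcard, ?_⟩
  have hrep : ∀ j : Fin s, ∃ x : {x // x ∈ F}, chf x = T.orderEmbOfFin hTcard j := by
    intro j
    have hmemT : T.orderEmbOfFin hTcard j ∈ T := Finset.orderEmbOfFin_mem _ _ _
    simp only [T, Finset.mem_image] at hmemT
    obtain ⟨x, _, hx⟩ := hmemT
    exact ⟨x, hx⟩
  have hval : ∀ j : Fin s, Aᵀ (T.orderEmbOfFin hTcard j) ∈ b := by
    intro j
    obtain ⟨x, hx⟩ := hrep j
    rw [← hx, hchf]
    simpa using Set.mem_toFinset.1 (hFsub x.2)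
  have hinj : Function.Injective
      (fun j : Fin s => (⟨Aᵀ (T.orderEmbOfFin hTcard j), hval j⟩ : b)) := by
    intro j j' h
    have h2 : Aᵀ (T.orderEmbOfFin hTcard j) = Aᵀ (T.orderEmbOfFin hTcard j') := by
      simpa [Subtype.ext_iff] using h
    obtain ⟨x, hx⟩ := hrep j
    obtain ⟨y, hy⟩ := hrep j'
    rw [← hx, ← hy, hchf, hchf] at h2
    have hxy : x = y := Subtype.ext h2
    apply (T.orderEmbOfFin hTcard).injective
    rw [← hx, ← hy, hxy]
  exact hbind.comp _ hinj

lemma exists_square_submatrix_det_ne_zero {m n : ℕ}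
    (A : Matrix (Fin m) (Fin n) K) {s : ℕ} (hs : s ≤ A.rank) :
    ∃ (S : Finset (Fin m)) (T : Finset (Fin n)) (hS : S.card = s) (hT : T.card = s),
      (A.submatrix (S.orderEmbOfFin hS) (T.orderEmbOfFin hT)).det ≠ 0 := by
  classical
  obtain ⟨T, hT, hind⟩ := exists_linearIndependent_cols A hs
  set A₀ : Matrix (Fin m) (Fin s) K := A.submatrix id (T.orderEmbOfFin hT) with hA₀
  have hrank₀ : A₀ᵀ.rank = s := by
    have : LinearIndependent K (fun j : Fin s => A₀ᵀ j) := hind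
    exact (show LinearIndependent K A₀ᵀ.row from this).rank_matrix.trans (Fintype.card_fin s)
  obtain ⟨S, hS, hind2⟩ := exists_linearIndependent_cols (s := s) A₀ᵀ (le_of_eq hrank₀.symm)
  refine ⟨S, T, hS, hT, ?_⟩
  have hrows : LinearIndependent K
      (fun i : Fin s => (A.submatrix (S.orderEmbOfFin hS) (T.orderEmbOfFin hT)) i) := hind2
  have := Matrix.linearIndependent_rows_iff_isUnit.1 hrows
  exact ((Matrix.isUnit_iff_isUnit_det _).1 this).ne_zero

end helpers2
section helpers3
variable {K : Type*} [Field K]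

lemma rank_scale_units {ι ι' : Type*} [Fintype ι] [Fintype ι'] [DecidableEq ι] [DecidableEq ι']
    (M' : Matrix ι ι' K) (M : Matrix ι ι' K) (u : ι → K) (v : ι' → K)
    (hu : ∀ i, u i ≠ 0) (hv : ∀ j, v j ≠ 0)
    (h : ∀ i j, M' i j = u i * M i j * v j) :
    M'.rank = M.rank := by
  have hM' : M' = Matrix.diagonal u * M * Matrix.diagonal v := by
    ext i j
    rw [h]
    simp [Matrix.mul_diagonal, Matrix.diagonal_mul, mul_comm, mul_assoc, mul_left_comm]
  have hdu : IsUnit (Matrix.diagonal u).det := by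
    rw [Matrix.det_diagonal]
    exact (Finset.prod_ne_zero_iff.2 fun i _ => hu i).isUnit
  have hdv : IsUnit (Matrix.diagonal v).det := by
    rw [Matrix.det_diagonal]
    exact (Finset.prod_ne_zero_iff.2 fun j _ => hv j).isUnit
  rw [hM', Matrix.rank_mul_eq_left_of_isUnit_det _ _ hdv,
    Matrix.rank_mul_eq_right_of_isUnit_det _ _ hdu]

/-- complement equivalence between `k`-subsets and `(n-k)`-subsets -/
def complEquiv (n k : ℕ) (hk : k ≤ n) :
    {s : Finset (Fin n) // s.card = k} ≃ {s : Finset (Fin n) // s.card = n - k} where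
  toFun S := ⟨S.1ᶜ, by simp [Finset.card_compl, S.2]⟩
  invFun T := ⟨T.1ᶜ, by simp [Finset.card_compl, T.2, Nat.sub_sub_self hk]⟩
  left_inv S := by simp
  right_inv T := by simp

lemma rank_adjCompound_eq_rank_compound {n k : ℕ} (hk : k ≤ n) (B : Matrix (Fin n) (Fin n) K) :
    (adjCompound k B).rank = (compound (n - k) B).rank := by
  classical
  set c := complEquiv n k hk
  set N : Matrix {s : Finset (Fin n) // s.card = k} {s : Finset (Fin n) // s.card = k} K :=
    ((compound (n - k) B)ᵀ).submatrix c c with hN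
  have key : ∀ S T, adjCompound k B S T =
      ((-1 : K) ^ (∑ i ∈ S.1, (i : ℕ))) * N S T * ((-1 : K) ^ (∑ j ∈ T.1, (j : ℕ))) := by
    intro S T
    have h0 : adjCompound k B S T =
        (-1 : K) ^ ((∑ i ∈ S.1, (i : ℕ)) + (∑ j ∈ T.1, (j : ℕ))) * N S T := rfl
    rw [h0, pow_add]
    ring
  have h1 : (adjCompound k B).rank = N.rank :=
    rank_scale_units _ N _ _ (fun i => by simp) (fun j => by simp) key
  rw [h1, hN, Matrix.rank_submatrix, Matrix.rank_transpose]

end helpers3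

section helpers4
variable {K : Type*} [Field K]

/-- singleton equivalence -/
def singEquiv (N : ℕ) : {s : Finset (Fin N) // s.card = 1} ≃ Fin N where
  toFun S := S.1.orderEmbOfFin S.2 0
  invFun i := ⟨{i}, Finset.card_singleton i⟩
  left_inv S := by
    obtain ⟨a, ha⟩ := Finset.card_eq_one.1 S.2
    apply Subtype.ext
    have haS : a ∈ S.1 := by rw [ha]; exact Finset.mem_singleton_self a
    have : S.1.orderEmbOfFin S.2 0 = a :=
      Finset.card_le_one.1 S.2.le _ (Finset.orderEmbOfFin_mem S.1 S.2 0) _ haS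
    show ({S.1.orderEmbOfFin S.2 0} : Finset _) = S.1
    rw [this, ha]
  right_inv i := by
    have h := Finset.orderEmbOfFin_mem {i} (Finset.card_singleton i) 0
    exact Finset.mem_singleton.1 h

lemma adjCompound_one_eq {N : ℕ} (B : Matrix (Fin (N + 1)) (Fin (N + 1)) K) :
    adjCompound 1 B = (Matrix.adjugate B).submatrix (singEquiv (N+1)) (singEquiv (N+1)) := by
  ext S T
  obtain ⟨a, ha⟩ := Finset.card_eq_one.1 S.2
  obtain ⟨b, hb⟩ := Finset.card_eq_one.1 T.2
  have haS : a ∈ S.1 := by rw [ha]; exact Finset.mem_singleton_self a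
  have hbT : b ∈ T.1 := by rw [hb]; exact Finset.mem_singleton_self b
  have heS : singEquiv (N+1) S = a :=
    Finset.card_le_one.1 S.2.le _ (Finset.orderEmbOfFin_mem S.1 S.2 0) _ haS
  have heT : singEquiv (N+1) T = b :=
    Finset.card_le_one.1 T.2.le _ (Finset.orderEmbOfFin_mem T.1 T.2 0) _ hbT
  have hsumS : (∑ i ∈ S.1, (i : ℕ)) = (a : ℕ) := by rw [ha, Finset.sum_singleton]
  have hsumT : (∑ j ∈ T.1, (j : ℕ)) = (b : ℕ) := by rw [hb, Finset.sum_singleton]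
  have hcomplT : ∀ (h : (T.1ᶜ).card = N + 1 - 1),
      ⇑(T.1ᶜ.orderEmbOfFin h) = b.succAbove := by
    intro h
    refine (Finset.orderEmbOfFin_unique h ?_ (Fin.strictMono_succAbove b)).symm
    intro x
    rw [hb]
    simp [Finset.mem_compl, Fin.succAbove_ne b x]
  have hcomplS : ∀ (h : (S.1ᶜ).card = N + 1 - 1),
      ⇑(S.1ᶜ.orderEmbOfFin h) = a.succAbove := by
    intro h
    refine (Finset.orderEmbOfFin_unique h ?_ (Fin.strictMono_succAbove a)).symm
    intro x
    rw [ha]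
    simp [Finset.mem_compl, Fin.succAbove_ne a x]
  show (-1 : K) ^ ((∑ i ∈ S.1, (i : ℕ)) + (∑ j ∈ T.1, (j : ℕ))) *
      (B.submatrix (T.1ᶜ.orderEmbOfFin _) (S.1ᶜ.orderEmbOfFin _)).det =
    Matrix.adjugate B (singEquiv (N+1) S) (singEquiv (N+1) T)
  rw [heS, heT, hsumS, hsumT, hcomplT, hcomplS,
    Matrix.adjugate_fin_succ_eq_det_submatrix, add_comm (a : ℕ) (b : ℕ)]

lemma rank_compound_pred_of_det_ne_zero {N : ℕ} (B : Matrix (Fin (N + 1)) (Fin (N + 1)) K)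
    (h : B.det ≠ 0) : (compound N B).rank = N + 1 := by
  classical
  have h1 : (adjCompound 1 B).rank = (compound N B).rank :=
    rank_adjCompound_eq_rank_compound (by omega) B
  rw [← h1, adjCompound_one_eq, Matrix.rank_submatrix]
  have hadj : IsUnit (Matrix.adjugate B) := by
    rw [Matrix.isUnit_iff_isUnit_det, Matrix.det_adjugate]
    exact (pow_ne_zero _ h).isUnit
  rw [Matrix.rank_of_isUnit _ hadj, Fintype.card_fin]

lemma compound_submatrix_map {N s m : ℕ} (B : Matrix (Fin N) (Fin N) K)
    (S₁ T₁ : Finset (Fin N)) (hS₁ : S₁.card = s) (hT₁ : T₁.card = s) :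
    compound m (B.submatrix (S₁.orderEmbOfFin hS₁) (T₁.orderEmbOfFin hT₁)) =
      (compound m B).submatrix
        (fun S' => ⟨S'.1.map (S₁.orderEmbOfFin hS₁).toEmbedding,
          by rw [Finset.card_map, S'.2]⟩)
        (fun T' => ⟨T'.1.map (T₁.orderEmbOfFin hT₁).toEmbedding,
          by rw [Finset.card_map, T'.2]⟩) := by
  ext S' T'
  have hf : ⇑(S₁.orderEmbOfFin hS₁) ∘ ⇑(S'.1.orderEmbOfFin S'.2) =
      ⇑((S'.1.map (S₁.orderEmbOfFin hS₁).toEmbedding).orderEmbOfFin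
        (by rw [Finset.card_map, S'.2])) :=
    Finset.orderEmbOfFin_unique _
      (fun x => Finset.mem_map_of_mem _ (Finset.orderEmbOfFin_mem _ _ _))
      ((S₁.orderEmbOfFin hS₁).strictMono.comp (S'.1.orderEmbOfFin S'.2).strictMono)
  have hg : ⇑(T₁.orderEmbOfFin hT₁) ∘ ⇑(T'.1.orderEmbOfFin T'.2) =
      ⇑((T'.1.map (T₁.orderEmbOfFin hT₁).toEmbedding).orderEmbOfFin
        (by rw [Finset.card_map, T'.2])) :=
    Finset.orderEmbOfFin_unique _
      (fun x => Finset.mem_map_of_mem _ (Finset.orderEmbOfFin_mem _ _ _))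
      ((T₁.orderEmbOfFin hT₁).strictMono.comp (T'.1.orderEmbOfFin T'.2).strictMono)
  show ((B.submatrix _ _).submatrix _ _).det = (B.submatrix _ _).det
  rw [Matrix.submatrix_submatrix, hf, hg]

end helpers4

section helpers5
variable {K : Type*} [Field K]

lemma compound_eq_zero_of_rank_lt {N m : ℕ} (B : Matrix (Fin N) (Fin N) K)
    (h : B.rank < m) : compound m B = 0 := by
  ext S T
  show (B.submatrix _ _).det = 0
  by_contra hne
  have := le_rank_of_det_ne_zero B (S.1.orderEmbOfFin S.2) (T.1.orderEmbOfFin T.2) hne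
  omega

lemma two_le_rank_compound {N m : ℕ} (hm : 1 ≤ m) (B : Matrix (Fin N) (Fin N) K)
    (h : m + 1 ≤ B.rank) : 2 ≤ (compound m B).rank := by
  classical
  obtain ⟨S₁, T₁, hS₁, hT₁, hdet⟩ := exists_square_submatrix_det_ne_zero B h
  set B' := B.submatrix (S₁.orderEmbOfFin hS₁) (T₁.orderEmbOfFin hT₁) with hB'
  have h1 : (compound m B').rank = m + 1 := rank_compound_pred_of_det_ne_zero B' hdet
  rw [compound_submatrix_map B S₁ T₁ hS₁ hT₁] at h1
  have h2 := rank_submatrix_le'' (compound m B)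
    (fun S' : {s : Finset (Fin (m+1)) // s.card = m} =>
      (⟨S'.1.map (S₁.orderEmbOfFin hS₁).toEmbedding, by rw [Finset.card_map, S'.2]⟩ :
        {s : Finset (Fin N) // s.card = m}))
    (fun T' : {s : Finset (Fin (m+1)) // s.card = m} =>
      (⟨T'.1.map (T₁.orderEmbOfFin hT₁).toEmbedding, by rw [Finset.card_map, T'.2]⟩ :
        {s : Finset (Fin N) // s.card = m}))
  rw [h1] at h2
  omega

lemma rank_compound_eq_one {N m : ℕ} (B : Matrix (Fin N) (Fin N) K)
    (h : B.rank = m) : (compound m B).rank = 1 := by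
  classical
  obtain ⟨S₀, T₀, hS₀, hT₀, hdet⟩ := exists_square_submatrix_det_ne_zero B h.ge
  -- rank ≥ 1
  have hge : 1 ≤ (compound m B).rank := by
    refine le_rank_of_det_ne_zero (compound m B)
      (fun _ : Fin 1 => ⟨S₀, hS₀⟩) (fun _ : Fin 1 => ⟨T₀, hT₀⟩) ?_
    rw [Matrix.det_fin_one]
    exact hdet
  -- rank ≤ 1
  set W := Submodule.span K (Set.range Bᵀ) with hW
  have hWr : Module.finrank K W = m := (Matrix.rank_eq_finrank_span_cols B).symm.trans h
  set B₀ : Matrix (Fin N) (Fin m) K := B.submatrix id (T₀.orderEmbOfFin hT₀) with hB₀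
  have hB₀rank : m ≤ B₀.rank :=
    le_rank_of_det_ne_zero B₀ (S₀.orderEmbOfFin hS₀) id hdet
  set W₀ := Submodule.span K (Set.range B₀ᵀ) with hW₀
  have hle : W₀ ≤ W := by
    rw [hW₀, Submodule.span_le]
    rintro _ ⟨j, rfl⟩
    exact Submodule.subset_span (Set.mem_range_self _)
  have hW₀r : m ≤ Module.finrank K W₀ := by
    rw [hW₀]
    exact hB₀rank.trans (Matrix.rank_eq_finrank_span_cols B₀).le
  have heq : W₀ = W := Submodule.eq_of_le_of_finrank_le hle (by omega)
  have hmem : ∀ t : Fin N, Bᵀ t ∈ W₀ := by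
    intro t
    rw [heq]
    exact Submodule.subset_span (Set.mem_range_self _)
  have hex : ∀ t : Fin N, ∃ c : Fin m → K, ∑ j, c j • B₀ᵀ j = Bᵀ t := by
    intro t
    exact (Submodule.mem_span_range_iff_exists_fun K).1 (hmem t)
  choose coef hcoef using hex
  -- factorization of columns
  have hcol : ∀ (S T : {t : Finset (Fin N) // t.card = m}),
      compound m B S T = compound m B S ⟨T₀, hT₀⟩ *
        (Matrix.of fun j p => coef (T.1.orderEmbOfFin T.2 p) j).det := by
    intro S T
    have hfac : B.submatrix (S.1.orderEmbOfFin S.2) (T.1.orderEmbOfFin T.2) =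
        B.submatrix (S.1.orderEmbOfFin S.2) (T₀.orderEmbOfFin hT₀) *
          (Matrix.of fun j p => coef (T.1.orderEmbOfFin T.2 p) j) := by
      ext i p
      rw [Matrix.mul_apply]
      have h1 := congrFun (hcoef (T.1.orderEmbOfFin T.2 p)) (S.1.orderEmbOfFin S.2 i)
      simp only [Finset.sum_apply, Pi.smul_apply, smul_eq_mul] at h1
      have h2 : ∑ x : Fin m, coef (T.1.orderEmbOfFin T.2 p) x *
          B (S.1.orderEmbOfFin S.2 i) (T₀.orderEmbOfFin hT₀ x) =
          B (S.1.orderEmbOfFin S.2 i) (T.1.orderEmbOfFin T.2 p) := h1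
      show B (S.1.orderEmbOfFin S.2 i) (T.1.orderEmbOfFin T.2 p) =
          ∑ j, B (S.1.orderEmbOfFin S.2 i) (T₀.orderEmbOfFin hT₀ j) *
            coef (T.1.orderEmbOfFin T.2 p) j
      rw [← h2]
      exact Finset.sum_congr rfl (fun j _ => mul_comm _ _)
    show (B.submatrix _ _).det = (B.submatrix _ _).det * _
    rw [hfac, Matrix.det_mul]
  have hle1 : (compound m B).rank ≤ 1 := by
    have houter : compound m B =
        (Matrix.of fun S (_ : Fin 1) => compound m B S ⟨T₀, hT₀⟩) *
          (Matrix.of fun (_ : Fin 1) T =>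
            (Matrix.of fun j p => coef (T.1.orderEmbOfFin T.2 p) j).det) := by
      ext S T
      rw [Matrix.mul_apply, Fin.sum_univ_one]
      exact hcol S T
    have hrank_eq := congrArg Matrix.rank houter
    rw [hrank_eq]
    refine le_trans (Matrix.rank_mul_le_left _ _) ?_
    simpa using Matrix.rank_le_card_width
      (Matrix.of fun S (_ : Fin 1) => compound m B S ⟨T₀, hT₀⟩)
  omega

end helpers5

/-- Let `A` be an `n × n` matrix over `K` (`K = ℝ` or `ℂ`), `λ ∈ K` an eigenvalue of `A`,
and `k ∈ {1, …, n-1}`.  Then the geometric multiplicity of `λ` equals `k` iff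
`rank (adj_k (A - λI)) = 1`. -/
theorem geometric_multiplicity_eq_iff_rank_adjCompound_eq_one
    {K : Type*} [RCLike K] {n : ℕ} (A : Matrix (Fin n) (Fin n) K) (lam : K)
    (hlam : ∃ v : Fin n → K, v ≠ 0 ∧ A *ᵥ v = lam • v)
    (k : ℕ) (hk1 : 1 ≤ k) (hk2 : k ≤ n - 1) :
    Module.finrank K (LinearMap.ker (A - lam • 1).mulVecLin) = k ↔
      (adjCompound k (A - lam • 1)).rank = 1 := by
  classical
  set B := A - lam • 1 with hB
  have hn2 : 2 ≤ n := by omega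
  have hrdef : B.rank = Module.finrank K (LinearMap.range B.mulVecLin) := rfl
  have hrn : B.rank + Module.finrank K (LinearMap.ker B.mulVecLin) = n := by
    have h1 := LinearMap.finrank_range_add_finrank_ker B.mulVecLin
    rw [Module.finrank_pi, Fintype.card_fin] at h1
    rw [hrdef]
    exact h1
  have hrankAdj : (adjCompound k B).rank = (compound (n - k) B).rank :=
    rank_adjCompound_eq_rank_compound (by omega) B
  constructor
  · intro hker
    have hr : B.rank = n - k := by omega
    rw [hrankAdj]
    exact rank_compound_eq_one B hr
  · intro hone
    rw [hrankAdj] at hone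
    have hr : B.rank = n - k := by
      by_contra hne
      rcases lt_or_gt_of_ne hne with hlt | hgt
      · rw [compound_eq_zero_of_rank_lt B hlt, Matrix.rank_zero] at hone
        omega
      · have h2 := two_le_rank_compound (m := n - k) (by omega) B (by omega)
        omega
    omega
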